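/- arXiv:1205.6016 — 4 statements merged into one kernel-verified Lean document; each statement's English description precedes it below -/
import Mathlib

section
/- For 0 < ℓ < n, the coefficient matrix of the Dicke state |ℓ,n⟩ across the bipartition of the first k qubits versus the remaining n−k qubits has rank equal to min(k, n−k, ℓ, n−ℓ) + 1. -/
/-- Hamming weight of an `n`-bit string. -/
def hammingWeight {n : ℕ} (x : Fin n → Bool) : ℕ :=
  (Finset.univ.filter fun i => x i = true).card

/-- The symmetric Dicke state `|ℓ,n⟩`: the normalized equal superposition of all
computational basis strings of Hamming weight `ℓ`. -/
noncomputable def dicke (n ℓ : ℕ) : (Fin n → Bool) → ℂ := fun x =>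
  if hammingWeight x = ℓ then ((Real.sqrt (n.choose ℓ) : ℂ))⁻¹ else 0

/-- The coefficient matrix of an `n`-qubit state across the bipartition `S | Sᶜ`. -/
def coeffMatrix {n : ℕ} (ψ : (Fin n → Bool) → ℂ) (S : Finset (Fin n)) :
    Matrix ({i // i ∈ S} → Bool) ({i // i ∉ S} → Bool) ℂ :=
  Matrix.of fun f g => ψ fun i => if h : i ∈ S then f ⟨i, h⟩ else g ⟨i, h⟩

open Finset Matrix

/-- Hamming weight of a Bool-valued function on a fintype. -/
def wtB {α : Type*} [Fintype α] (f : α → Bool) : ℕ :=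
  (Finset.univ.filter fun i => f i = true).card

lemma wtB_le {α : Type*} [Fintype α] (f : α → Bool) : wtB f ≤ Fintype.card α :=
  le_trans (Finset.card_filter_le _ _) (le_of_eq Finset.card_univ)

lemma exists_wtB {α : Type*} [Fintype α] [DecidableEq α] (a : ℕ) (h : a ≤ Fintype.card α) :
    ∃ f : α → Bool, wtB f = a := by
  obtain ⟨T, -, hT⟩ := Finset.exists_subset_card_eq (s := (Finset.univ : Finset α)) (n := a) (by simpa using h)
  refine ⟨fun i => decide (i ∈ T), ?_⟩
  simp only [wtB, decide_eq_true_eq]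
  rw [← hT]
  congr 1
  ext i
  simp

lemma hw_split {n : ℕ} (S : Finset (Fin n)) (f : {i // i ∈ S} → Bool) (g : {i // i ∉ S} → Bool) :
    hammingWeight (fun i => if h : i ∈ S then f ⟨i, h⟩ else g ⟨i, h⟩) = wtB f + wtB g := by
  classical
  unfold hammingWeight wtB
  have h1 : (Finset.univ.filter fun i : Fin n =>
        (if h : i ∈ S then f ⟨i, h⟩ else g ⟨i, h⟩) = true)
      = ((Finset.univ.filter fun j : {i // i ∈ S} => f j = true).image Subtype.val)
        ∪ ((Finset.univ.filter fun j : {i // i ∉ S} => g j = true).image Subtype.val) := by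
    ext i
    by_cases h : i ∈ S <;> simp [h, Subtype.exists]
  rw [h1, Finset.card_union_of_disjoint, Finset.card_image_of_injective _ Subtype.val_injective,
    Finset.card_image_of_injective _ Subtype.val_injective]
  · rw [Finset.disjoint_left]
    rintro i hi hi'
    simp only [Finset.mem_image, Finset.mem_filter, Finset.mem_univ, true_and,
      Subtype.exists] at hi hi'
    obtain ⟨a, ha, -, rfl⟩ := hi
    obtain ⟨b, hb, -, hba⟩ := hi'
    exact hb (hba ▸ ha)

lemma card_filter_lt (n k : ℕ) (hk : k ≤ n) :
    (Finset.univ.filter fun i : Fin n => (i : ℕ) < k).card = k := by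
  rw [Finset.card_filter, Fin.sum_univ_eq_sum_range (fun i => if i < k then 1 else 0),
    ← Finset.card_filter]
  have : (Finset.range n).filter (fun i => i < k) = Finset.range k := by
    ext i; simp; omega
  rw [this, Finset.card_range]

lemma rank_submatrix_le'' {m n p q : Type*} [Fintype m] [Fintype n] [Fintype p] [Fintype q]
    [DecidableEq m] [DecidableEq n]
    (A : Matrix m n ℂ) (r : p → m) (c : q → n) :
    (A.submatrix r c).rank ≤ A.rank := by
  have h1 : A.submatrix r c =
      ((1 : Matrix m m ℂ).submatrix r (Equiv.refl m)) * A
        * ((1 : Matrix n n ℂ).submatrix (Equiv.refl n) c) := by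
    rw [Matrix.mul_assoc, Matrix.mul_submatrix_one, Matrix.one_submatrix_mul]
    simp [Matrix.submatrix_submatrix]
  rw [h1]
  exact le_trans (Matrix.rank_mul_le_left _ _)
    (le_trans (Matrix.rank_mul_le_right _ _) le_rfl)

lemma rank_smul_eq {m n : Type*} [Fintype m] [Fintype n] [DecidableEq m]
    (c : ℂ) (hc : c ≠ 0) (A : Matrix m n ℂ) : (c • A).rank = A.rank := by
  rw [Matrix.smul_eq_diagonal_mul]
  exact Matrix.rank_mul_eq_right_of_isUnit_det (Matrix.diagonal fun _ => c) A
    (by rw [Matrix.det_diagonal, Finset.prod_const]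
        exact (isUnit_iff_ne_zero).mpr (pow_ne_zero _ hc))

/-- For `0 < ℓ < n`, the coefficient matrix of the Dicke state `|ℓ,n⟩` across the
bipartition of the first `k` qubits versus the remaining `n - k` qubits has rank
`min(k, n-k, ℓ, n-ℓ) + 1`. -/
theorem dicke_rank_eq (n ℓ k : ℕ) (h0 : 0 < ℓ) (hn : ℓ < n) (hk0 : 0 < k) (hkn : k < n) :
    (coeffMatrix (dicke n ℓ) (Finset.univ.filter fun i : Fin n => (i : ℕ) < k)).rank
      = min (min k (n - k)) (min ℓ (n - ℓ)) + 1 := by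
  classical
  set S : Finset (Fin n) := Finset.univ.filter fun i : Fin n => (i : ℕ) < k with hS
  have hScard : Fintype.card {i // i ∈ S} = k := by
    rw [Fintype.card_coe, hS, card_filter_lt n k hkn.le]
  have hSccard : Fintype.card {i // i ∉ S} = n - k := by
    rw [Fintype.card_subtype]
    have h2 : (Finset.univ.filter fun i => i ∉ S) = Sᶜ := by ext i; simp
    rw [h2, Finset.card_compl, Fintype.card_fin, hS, card_filter_lt n k hkn.le]
  set m := min (min k (n - k)) (min ℓ (n - ℓ)) with hm
  set lo := ℓ - (n - k) with hlo
  set c : ℂ := ((Real.sqrt (n.choose ℓ) : ℂ))⁻¹ with hcdef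
  have hcn : (0 : ℕ) < n.choose ℓ := Nat.choose_pos hn.le
  have hsq : Real.sqrt (n.choose ℓ) ≠ 0 :=
    ne_of_gt (Real.sqrt_pos.mpr (by exact_mod_cast hcn))
  have hc : c ≠ 0 := inv_ne_zero (by exact_mod_cast hsq)
  have hM : ∀ (f : {i // i ∈ S} → Bool) (g : {i // i ∉ S} → Bool),
      coeffMatrix (dicke n ℓ) S f g = if wtB f + wtB g = ℓ then c else 0 := by
    intro f g
    show dicke n ℓ _ = _
    rw [dicke, hw_split]
  set P : Matrix ({i // i ∈ S} → Bool) (Fin (m + 1)) ℂ :=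
    Matrix.of fun f i => if wtB f = lo + (i : ℕ) then 1 else 0 with hP
  set Q : Matrix (Fin (m + 1)) ({i // i ∉ S} → Bool) ℂ :=
    Matrix.of fun i g => if wtB g = ℓ - (lo + (i : ℕ)) then 1 else 0 with hQ
  have hbound : ∀ i : Fin (m + 1), lo + (i : ℕ) ≤ k ∧ lo + (i : ℕ) ≤ ℓ ∧
      ℓ - (lo + (i : ℕ)) ≤ n - k := by
    intro i
    have := i.isLt
    omega
  have hfac : coeffMatrix (dicke n ℓ) S = c • (P * Q) := by
    ext f g
    rw [hM f g]
    simp only [Matrix.smul_apply, Matrix.mul_apply, hP, hQ, Matrix.of_apply, smul_eq_mul]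
    have hfk : wtB f ≤ k := hScard ▸ wtB_le f
    have hgk : wtB g ≤ n - k := hSccard ▸ wtB_le g
    by_cases hfg : wtB f + wtB g = ℓ
    · rw [if_pos hfg]
      have hi0 : wtB f - lo < m + 1 := by omega
      rw [Finset.sum_eq_single (⟨wtB f - lo, hi0⟩ : Fin (m + 1))]
      · rw [if_pos (by simp; omega), if_pos (by simp; omega)]
        ring
      · intro j _ hj
        by_cases h1 : wtB f = lo + (j : ℕ)
        · exact absurd (Fin.ext (by simp; omega)) (Ne.symm hj)
        · simp [h1]
      · intro h; exact absurd (Finset.mem_univ _) h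
    · rw [if_neg hfg]
      have hz : ∀ j ∈ (Finset.univ : Finset (Fin (m + 1))),
          (if wtB f = lo + (j : ℕ) then (1:ℂ) else 0) *
            (if wtB g = ℓ - (lo + (j : ℕ)) then (1:ℂ) else 0) = 0 := by
        intro j _
        by_cases h1 : wtB f = lo + (j : ℕ)
        · by_cases h2 : wtB g = ℓ - (lo + (j : ℕ))
          · exact absurd (by have := (hbound j).2.1; omega) hfg
          · simp [h2]
        · simp [h1]
      rw [Finset.sum_congr rfl hz, Finset.sum_const, smul_zero, mul_zero]
  have hup : (coeffMatrix (dicke n ℓ) S).rank ≤ m + 1 := by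
    rw [hfac, rank_smul_eq c hc]
    exact le_trans (Matrix.rank_mul_le_left P Q)
      (by simpa using P.rank_le_card_width)
  have hr : ∀ i : Fin (m + 1), ∃ f : {i // i ∈ S} → Bool, wtB f = lo + (i : ℕ) := by
    intro i
    exact exists_wtB _ (by rw [hScard]; exact (hbound i).1)
  have hcc : ∀ j : Fin (m + 1), ∃ g : {i // i ∉ S} → Bool, wtB g = ℓ - (lo + (j : ℕ)) := by
    intro j
    exact exists_wtB _ (by rw [hSccard]; exact (hbound j).2.2)
  choose r hrw using hr
  choose cc hccw using hcc
  have hsub : (coeffMatrix (dicke n ℓ) S).submatrix r cc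
      = c • (1 : Matrix (Fin (m + 1)) (Fin (m + 1)) ℂ) := by
    ext i j
    rw [Matrix.submatrix_apply, hM, hrw i, hccw j]
    simp only [Matrix.smul_apply, Matrix.one_apply, smul_eq_mul]
    by_cases hij : i = j
    · subst hij
      rw [if_pos (by have := (hbound i).2.1; omega), if_pos rfl, mul_one]
    · have hvij : (i : ℕ) ≠ (j : ℕ) := fun h => hij (Fin.ext h)
      have hjb := (hbound j).2.1
      have hib := (hbound i).2.1
      rw [if_neg (by omega), if_neg hij, mul_zero]
  have hlow : m + 1 ≤ (coeffMatrix (dicke n ℓ) S).rank := by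
    have h1 : ((coeffMatrix (dicke n ℓ) S).submatrix r cc).rank = m + 1 := by
      rw [hsub, rank_smul_eq c hc, Matrix.rank_one, Fintype.card_fin]
    rw [← h1]
    exact rank_submatrix_le'' _ r cc
  omega
end

section
/- For the mixed state ρ = p|ℓ,n⟩⟨ℓ,n| + (1−p)|ℓ',n⟩⟨ℓ',n| with 0 < p < 1 and ℓ ≠ ℓ', ρ is not a product state ρ₁ ⊗ ρ₂ across any bipartition of the n qubits (i.e., ρ has genuine n-partite correlations). -/
/-- Combine assignments on `S` and on its complement into one basis string. -/
def combine {n : ℕ} (S : Finset (Fin n)) (f : {i // i ∈ S} → Bool)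
    (g : {i // i ∉ S} → Bool) : Fin n → Bool := fun i =>
  if h : i ∈ S then f ⟨i, h⟩ else g ⟨i, h⟩

/-- Combinatorial core: given a bipartition into parts of sizes `k, m ≥ 1` and two
distinct levels `ℓ ≠ ℓ'`, one can choose local weights `a, a' ≤ k` and `b, b' ≤ m`
so that `a+b` and `a'+b'` hit the levels while `a+b'` or `a'+b` misses both. -/
lemma key_comb (k m ℓ ℓ' : ℕ) (hk : 1 ≤ k) (hm : 1 ≤ m) (hl : ℓ ≤ k+m) (hl' : ℓ' ≤ k+m)
    (hne : ℓ ≠ ℓ') :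
    ∃ a a' b b', a ≤ k ∧ a' ≤ k ∧ b ≤ m ∧ b' ≤ m ∧
      (a+b = ℓ ∨ a+b = ℓ') ∧ (a'+b' = ℓ ∨ a'+b' = ℓ') ∧
      ¬((a+b' = ℓ ∨ a+b' = ℓ') ∧ (a'+b = ℓ ∨ a'+b = ℓ')) := by
  by_cases h1 : 0 < ℓ ∧ ℓ < k + m
  · exact ⟨ℓ - min m ℓ, min k ℓ, min m ℓ, ℓ - min k ℓ, by omega⟩
  by_cases h2 : 0 < ℓ' ∧ ℓ' < k + m
  · exact ⟨ℓ' - min m ℓ', min k ℓ', min m ℓ', ℓ' - min k ℓ', by omega⟩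
  · exact ⟨0, k, 0, m, by omega⟩

lemma exists_fun_weight {α : Type*} [Fintype α] [DecidableEq α] (a : ℕ)
    (ha : a ≤ Fintype.card α) :
    ∃ f : α → Bool, (Finset.univ.filter fun i => f i = true).card = a := by
  obtain ⟨t, -, ht⟩ := Finset.exists_subset_card_eq (s := (Finset.univ : Finset α))
    (by simpa using ha)
  refine ⟨fun i => decide (i ∈ t), ?_⟩
  rw [← ht]; congr 1; ext i; simp

lemma hammingWeight_combine {n : ℕ} (S : Finset (Fin n)) (f : {i // i ∈ S} → Bool)
    (g : {i // i ∉ S} → Bool) :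
    hammingWeight (combine S f g) =
      (Finset.univ.filter fun i : {i // i ∈ S} => f i = true).card +
      (Finset.univ.filter fun i : {i // i ∉ S} => g i = true).card := by
  classical
  unfold hammingWeight
  have hsplit : (Finset.univ.filter fun i => combine S f g i = true)
      = (S.filter fun i => combine S f g i = true)
        ∪ (Sᶜ.filter fun i => combine S f g i = true) := by
    rw [← Finset.filter_union, Finset.union_compl]
  rw [hsplit, Finset.card_union_of_disjoint
    (Finset.disjoint_filter_filter (disjoint_compl_right))]
  congr 1
  · apply Finset.card_bij (fun i hi => (⟨i, (Finset.mem_filter.mp hi).1⟩ : {i // i ∈ S}))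
    · intro a ha
      have ha' := Finset.mem_filter.mp ha
      simp only [Finset.mem_filter, Finset.mem_univ, true_and]
      have : combine S f g a = f ⟨a, ha'.1⟩ := by simp [combine, ha'.1]
      rw [← this]; exact ha'.2
    · intro a ha b hb h
      exact Subtype.mk_eq_mk.mp h ▸ rfl
    · intro b hb
      refine ⟨b.1, ?_, rfl⟩
      have hb' := (Finset.mem_filter.mp hb).2
      refine Finset.mem_filter.mpr ⟨b.2, ?_⟩
      simpa [combine, b.2] using hb'
  · apply Finset.card_bij (fun i hi =>
      (⟨i, by simpa using (Finset.mem_filter.mp hi).1⟩ : {i // i ∉ S}))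
    · intro a ha
      have ha' := Finset.mem_filter.mp ha
      have haS : a ∉ S := by simpa using ha'.1
      simp only [Finset.mem_filter, Finset.mem_univ, true_and]
      have : combine S f g a = g ⟨a, haS⟩ := by simp [combine, haS]
      rw [← this]; exact ha'.2
    · intro a ha b hb h
      exact Subtype.mk_eq_mk.mp h ▸ rfl
    · intro b hb
      refine ⟨b.1, ?_, rfl⟩
      have hb' := (Finset.mem_filter.mp hb).2
      refine Finset.mem_filter.mpr ⟨by simpa using b.2, ?_⟩
      simpa [combine, b.2] using hb'

lemma dicke_ne_zero {n ℓ : ℕ} (hℓ : ℓ ≤ n) {x : Fin n → Bool}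
    (hx : hammingWeight x = ℓ) : dicke n ℓ x ≠ 0 := by
  unfold dicke
  rw [if_pos hx]
  refine inv_ne_zero ?_
  simp only [ne_eq, Complex.ofReal_eq_zero]
  rw [Real.sqrt_eq_zero']
  push_neg
  exact_mod_cast Nat.choose_pos hℓ

lemma dicke_eq_zero {n ℓ : ℕ} {x : Fin n → Bool}
    (hx : hammingWeight x ≠ ℓ) : dicke n ℓ x = 0 := if_neg hx

lemma rho_diag (n ℓ ℓ' : ℕ) (p : ℝ) (x : Fin n → Bool) :
    ((p : ℂ) • Matrix.vecMulVec (dicke n ℓ) (star (dicke n ℓ))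
        + ((1 - p : ℝ) : ℂ) • Matrix.vecMulVec (dicke n ℓ') (star (dicke n ℓ'))) x x
    = (p : ℂ) * (dicke n ℓ x * star (dicke n ℓ x))
      + ((1 - p : ℝ) : ℂ) * (dicke n ℓ' x * star (dicke n ℓ' x)) := by
  simp [Matrix.add_apply, Matrix.smul_apply, Matrix.vecMulVec_apply, Pi.star_apply]

lemma rho_diag_ne_zero (n ℓ ℓ' : ℕ) (hℓ : ℓ ≤ n) (hℓ' : ℓ' ≤ n) (hne : ℓ ≠ ℓ') (p : ℝ)
    (hp0 : 0 < p) (hp1 : p < 1) (x : Fin n → Bool)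
    (hw : hammingWeight x = ℓ ∨ hammingWeight x = ℓ') :
    ((p : ℂ) • Matrix.vecMulVec (dicke n ℓ) (star (dicke n ℓ))
        + ((1 - p : ℝ) : ℂ) • Matrix.vecMulVec (dicke n ℓ') (star (dicke n ℓ'))) x x ≠ 0 := by
  rw [rho_diag]
  rcases hw with hw | hw
  · rw [dicke_eq_zero (n := n) (ℓ := ℓ') (hw ▸ hne)]
    simp only [star_zero, mul_zero, add_zero]
    exact mul_ne_zero (by exact_mod_cast hp0.ne')
      (mul_ne_zero (dicke_ne_zero hℓ hw) (star_ne_zero.mpr (dicke_ne_zero hℓ hw)))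
  · rw [dicke_eq_zero (n := n) (ℓ := ℓ) (fun h => hne (h ▸ hw ▸ rfl))]
    simp only [star_zero, zero_mul, mul_zero, zero_add]
    refine mul_ne_zero ?_
      (mul_ne_zero (dicke_ne_zero hℓ' hw) (star_ne_zero.mpr (dicke_ne_zero hℓ' hw)))
    simp only [ne_eq, Complex.ofReal_eq_zero]
    linarith

lemma rho_diag_eq_zero (n ℓ ℓ' : ℕ) (p : ℝ) (x : Fin n → Bool)
    (hw : hammingWeight x ≠ ℓ) (hw' : hammingWeight x ≠ ℓ') :
    ((p : ℂ) • Matrix.vecMulVec (dicke n ℓ) (star (dicke n ℓ))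
        + ((1 - p : ℝ) : ℂ) • Matrix.vecMulVec (dicke n ℓ') (star (dicke n ℓ'))) x x = 0 := by
  rw [rho_diag, dicke_eq_zero hw, dicke_eq_zero hw']
  simp

/-- The mixture `ρ = p|ℓ,n⟩⟨ℓ,n| + (1-p)|ℓ',n⟩⟨ℓ',n|` with `0 < p < 1` and `ℓ ≠ ℓ'`
is not a product state `ρ₁ ⊗ ρ₂` across any bipartition of the `n` qubits: it has
genuine `n`-partite correlations. -/
theorem dicke_mixture_genuine_correlation (n ℓ ℓ' : ℕ) (hℓ : ℓ ≤ n) (hℓ' : ℓ' ≤ n)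
    (hne : ℓ ≠ ℓ') (p : ℝ) (hp0 : 0 < p) (hp1 : p < 1)
    (ρ : Matrix (Fin n → Bool) (Fin n → Bool) ℂ)
    (hρ : ρ = (p : ℂ) • Matrix.vecMulVec (dicke n ℓ) (star (dicke n ℓ))
        + ((1 - p : ℝ) : ℂ) • Matrix.vecMulVec (dicke n ℓ') (star (dicke n ℓ'))) :
    ∀ S : Finset (Fin n), S.Nonempty → S ≠ Finset.univ →
      ¬ ∃ (ρ₁ : Matrix ({i // i ∈ S} → Bool) ({i // i ∈ S} → Bool) ℂ)
          (ρ₂ : Matrix ({i // i ∉ S} → Bool) ({i // i ∉ S} → Bool) ℂ),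
        ∀ f g f' g', ρ (combine S f g) (combine S f' g') = ρ₁ f f' * ρ₂ g g' := by
  classical
  intro S hS hSu h
  obtain ⟨ρ₁, ρ₂, hfac⟩ := h
  set k := Fintype.card {i // i ∈ S} with hk_def
  set m := Fintype.card {i // i ∉ S} with hm_def
  have hk : 1 ≤ k := Fintype.card_pos_iff.mpr ⟨⟨hS.choose, hS.choose_spec⟩⟩
  have hm : 1 ≤ m := by
    have : ∃ i, i ∉ S := by
      by_contra hc
      push_neg at hc
      exact hSu (Finset.eq_univ_iff_forall.mpr hc)
    exact Fintype.card_pos_iff.mpr ⟨⟨this.choose, this.choose_spec⟩⟩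
  have hkm : k + m = n := by
    have h1 : k = S.card := by
      rw [hk_def, ← Fintype.card_coe]
    have h2 : m = Sᶜ.card := by
      rw [hm_def, ← Fintype.card_coe]
      exact Fintype.card_congr (Equiv.subtypeEquivRight (by simp))
    have h3 := Finset.card_add_card_compl S
    simp only [Fintype.card_fin] at h3
    omega
  obtain ⟨a, a', b, b', hak, ha'k, hbm, hb'm, hab, ha'b', hcross⟩ :=
    key_comb k m ℓ ℓ' hk hm (by omega) (by omega) hne
  obtain ⟨f, hf⟩ := exists_fun_weight (α := {i // i ∈ S}) a hak
  obtain ⟨f', hf'⟩ := exists_fun_weight (α := {i // i ∈ S}) a' ha'k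
  obtain ⟨g, hg⟩ := exists_fun_weight (α := {i // i ∉ S}) b hbm
  obtain ⟨g', hg'⟩ := exists_fun_weight (α := {i // i ∉ S}) b' hb'm
  have w11 : hammingWeight (combine S f g) = a + b := by
    rw [hammingWeight_combine, hf, hg]
  have w22 : hammingWeight (combine S f' g') = a' + b' := by
    rw [hammingWeight_combine, hf', hg']
  have w12 : hammingWeight (combine S f g') = a + b' := by
    rw [hammingWeight_combine, hf, hg']
  have w21 : hammingWeight (combine S f' g) = a' + b := by
    rw [hammingWeight_combine, hf', hg]
  have h11 : ρ₁ f f * ρ₂ g g ≠ 0 := by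
    rw [← hfac f g f g, hρ]
    exact rho_diag_ne_zero n ℓ ℓ' hℓ hℓ' hne p hp0 hp1 _ (by rw [w11]; exact hab)
  have h22 : ρ₁ f' f' * ρ₂ g' g' ≠ 0 := by
    rw [← hfac f' g' f' g', hρ]
    exact rho_diag_ne_zero n ℓ ℓ' hℓ hℓ' hne p hp0 hp1 _ (by rw [w22]; exact ha'b')
  have hzero : (ρ₁ f f' * ρ₂ g g') * (ρ₁ f' f * ρ₂ g' g) = 0 ∨ True := Or.inr trivial
  -- one of the "cross" diagonal entries vanishes
  have hcross' : ρ₁ f f * ρ₂ g' g' = 0 ∨ ρ₁ f' f' * ρ₂ g g = 0 := by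
    rcases not_and_or.mp hcross with hc | hc
    · left
      rw [← hfac f g' f g', hρ]
      push_neg at hc
      exact rho_diag_eq_zero n ℓ ℓ' p _ (by rw [w12]; exact hc.1) (by rw [w12]; exact hc.2)
    · right
      rw [← hfac f' g f' g, hρ]
      push_neg at hc
      exact rho_diag_eq_zero n ℓ ℓ' p _ (by rw [w21]; exact hc.1) (by rw [w21]; exact hc.2)
  have hmain : (ρ₁ f f * ρ₂ g g) * (ρ₁ f' f' * ρ₂ g' g')
      = (ρ₁ f f * ρ₂ g' g') * (ρ₁ f' f' * ρ₂ g g) := by ring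
  rcases hcross' with hc | hc <;>
    · rw [hc] at hmain
      simp only [zero_mul, mul_zero] at hmain
      exact mul_ne_zero h11 h22 hmain
end

section
/- The Smolin state ρ = (1/4) Σ_{x,y∈{0,1}} |β_{xy}⟩_{AB}⟨β_{xy}| ⊗ |β_{xy}⟩_{CD}⟨β_{xy}| is not a product state across any bipartition of the four qubits A, B, C, D (i.e., it has genuine 4-partite correlations). -/
/-- The Bell state `|β_{xy}⟩ = (|0,y⟩ + (−1)^x |1,ȳ⟩)/√2` as an amplitude function. -/
noncomputable def bell (x y a b : Bool) : ℂ :=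
  ((Real.sqrt 2 : ℂ))⁻¹ * (if b = xor a y then (if a && x then -1 else 1) else 0)

/-- The pure state `|β_{xy}⟩_{AB} ⊗ |β_{xy}⟩_{CD}` on four qubits, the qubits being
labeled by `Fin 4` (A = 0, B = 1, C = 2, D = 3). -/
noncomputable def bellPair (x y : Bool) : (Fin 4 → Bool) → ℂ := fun f =>
  bell x y (f 0) (f 1) * bell x y (f 2) (f 3)

/-- Integer version of the Bell amplitude (up to the `(√2)⁻¹` factor). -/
def bellI (x y a b : Bool) : ℤ := if b = xor a y then (if a && x then -1 else 1) else 0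

lemma bell_eq (x y a b : Bool) :
    bell x y a b = ((Real.sqrt 2 : ℂ))⁻¹ * ((bellI x y a b : ℤ) : ℂ) := by
  unfold bell bellI
  split_ifs <;> push_cast <;> ring

lemma sqrt2_sq : ((Real.sqrt 2 : ℂ))⁻¹ * ((Real.sqrt 2 : ℂ))⁻¹ = 1 / 2 := by
  rw [← mul_inv]
  have : ((Real.sqrt 2 : ℝ) : ℂ) * ((Real.sqrt 2 : ℝ) : ℂ) = (2 : ℂ) := by
    rw [← Complex.ofReal_mul, Real.mul_self_sqrt (by norm_num)]
    norm_num
  rw [this]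
  norm_num

lemma bellPair_eq (x y : Bool) (f : Fin 4 → Bool) :
    bellPair x y f =
      (1 / 2 : ℂ) * ((bellI x y (f 0) (f 1) * bellI x y (f 2) (f 3) : ℤ) : ℂ) := by
  unfold bellPair
  rw [bell_eq, bell_eq]
  push_cast
  rw [← sqrt2_sq]
  ring

/-- Integer-valued diagonal weight. -/
def Nfun (s : Fin 4 → Bool) : ℤ :=
  ∑ x : Bool, ∑ y : Bool, (bellI x y (s 0) (s 1) * bellI x y (s 2) (s 3)) ^ 2

lemma rho_diag_s18 (ρ : Matrix (Fin 4 → Bool) (Fin 4 → Bool) ℂ)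
    (hρ : ρ = (1 / 4 : ℂ) • ∑ x : Bool, ∑ y : Bool,
        Matrix.vecMulVec (bellPair x y) (star (bellPair x y)))
    (s : Fin 4 → Bool) :
    ρ s s = (1 / 16 : ℂ) * ((Nfun s : ℤ) : ℂ) := by
  subst hρ
  simp only [Matrix.smul_apply, Matrix.sum_apply, Matrix.vecMulVec_apply, Pi.star_apply,
    bellPair_eq, Nfun, smul_eq_mul]
  push_cast
  simp only [star_mul', map_intCast, map_div₀, map_one, map_ofNat, RingHom.map_one]
  rw [Finset.mul_sum, Finset.mul_sum]
  apply Finset.sum_congr rfl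
  intro x _
  rw [Finset.mul_sum, Finset.mul_sum]
  apply Finset.sum_congr rfl
  intro y _
  simp only [Complex.star_def, map_div₀, map_one, map_ofNat, map_intCast]
  ring

lemma Nfun_parity (s : Fin 4 → Bool) :
    Nfun s = if xor (s 0) (xor (s 1) (xor (s 2) (s 3))) then 0 else 2 := by
  have h : ∀ a b c d : Bool,
      Nfun (fun k => if k = 0 then a else if k = 1 then b else if k = 2 then c else d)
        = if xor a (xor b (xor c d)) then 0 else 2 := by decide
  have hs : s = fun k =>
      if k = 0 then s 0 else if k = 1 then s 1 else if k = 2 then s 2 else s 3 := by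
    funext k
    fin_cases k <;> simp
  conv_lhs => rw [hs]
  rw [h]

lemma parity_lemma : ∀ (i j : Fin 4), i ≠ j → ∀ u v : Bool,
    (let s : Fin 4 → Bool := fun k => if k = i then u else if k = j then v else false
     xor (s 0) (xor (s 1) (xor (s 2) (s 3)))) = xor u v := by decide

/-- The Smolin state `ρ = (1/4) ∑_{x,y} |β_{xy}⟩⟨β_{xy}|_{AB} ⊗ |β_{xy}⟩⟨β_{xy}|_{CD}`
is not a product state across any bipartition of the four qubits: it has genuine
4-partite correlations. -/
theorem smolin_genuine_correlation (ρ : Matrix (Fin 4 → Bool) (Fin 4 → Bool) ℂ)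
    (hρ : ρ = (1 / 4 : ℂ) • ∑ x : Bool, ∑ y : Bool,
        Matrix.vecMulVec (bellPair x y) (star (bellPair x y))) :
    ∀ S : Finset (Fin 4), S.Nonempty → S ≠ Finset.univ →
      ¬ ∃ (ρ₁ : Matrix ({i // i ∈ S} → Bool) ({i // i ∈ S} → Bool) ℂ)
          (ρ₂ : Matrix ({i // i ∉ S} → Bool) ({i // i ∉ S} → Bool) ℂ),
        ∀ f g f' g', ρ (combine S f g) (combine S f' g') = ρ₁ f f' * ρ₂ g g' := by
  intro S hS hSne
  rintro ⟨ρ₁, ρ₂, h⟩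
  obtain ⟨i, hi⟩ := hS
  obtain ⟨j, hj⟩ : ∃ j, j ∉ S := by
    by_contra hc
    push_neg at hc
    exact hSne (Finset.eq_univ_iff_forall.mpr hc)
  have hij : i ≠ j := fun e => hj (e ▸ hi)
  set fU : Bool → ({i // i ∈ S} → Bool) := fun u k => if (k : Fin 4) = i then u else false
  set gV : Bool → ({i // i ∉ S} → Bool) := fun v k => if (k : Fin 4) = j then v else false
  have hc : ∀ u v : Bool, combine S (fU u) (gV v)
      = fun k => if k = i then u else if k = j then v else false := by
    intro u v
    funext k
    unfold combine
    by_cases hk : k ∈ S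
    · simp only [hk, dif_pos, fU]
      by_cases hki : k = i
      · simp [hki]
      · have hkj : k ≠ j := fun e => hj (e ▸ hk)
        simp [hki, hkj]
    · simp only [hk, dif_neg, not_false_iff, gV]
      have hki : k ≠ i := fun e => hk (e ▸ hi)
      simp [hki]
  have hval : ∀ u v : Bool,
      ρ₁ (fU u) (fU u) * ρ₂ (gV v) (gV v)
        = if xor u v then 0 else (1 / 8 : ℂ) := by
    intro u v
    rw [← h, hc u v, rho_diag_s18 ρ hρ, Nfun_parity]
    have := parity_lemma i j hij u v
    simp only at this
    rw [this]
    cases u <;> cases v <;> norm_num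
  have h00 := hval false false
  have h11 := hval true true
  have h01 := hval false true
  have h10 := hval true false
  simp only [Bool.xor_false, Bool.xor_true, Bool.false_xor, Bool.true_xor,
    Bool.not_false, Bool.not_true, if_true, if_false, ite_true, ite_false] at h00 h11 h01 h10
  have key : (ρ₁ (fU false) (fU false) * ρ₂ (gV false) (gV false))
      * (ρ₁ (fU true) (fU true) * ρ₂ (gV true) (gV true))
      = (ρ₁ (fU false) (fU false) * ρ₂ (gV true) (gV true))
      * (ρ₁ (fU true) (fU true) * ρ₂ (gV false) (gV false)) := by ring
  rw [h00, h11, h01, h10] at key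
  norm_num at key
end

section
/- For a pure state ψ ∈ ℂ^{d₁} ⊗ ⋯ ⊗ ℂ^{d_n}, the factorization of ψ into a tensor product of non-further-factorizable (across any bipartition of their tensor factors) pure states is unique up to scalar multiples and ordering: if ψ = φ₁ ⊗ ⋯ ⊗ φ_M = χ₁ ⊗ ⋯ ⊗ χ_K are two such factorizations where each factor acts on a subset of the parties and is not a product across any bipartition of its parties, then M = K, the underlying partitions of {1,…,n} coincide, and corresponding factors agree up to nonzero scalars. -/
/-- A multipartite pure state (given by its amplitude function `ψ` on parties `I` with
local dimensions `D`) is a product across the bipartition `S | Sᶜ`. -/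
def IsProductAcross {I : Type} [Fintype I] [DecidableEq I] {D : I → ℕ}
    (ψ : ((i : I) → Fin (D i)) → ℂ) (S : Finset I) : Prop :=
  ∃ (u : ((i : {i // i ∈ S}) → Fin (D i.1)) → ℂ)
    (v : ((i : {i // i ∉ S}) → Fin (D i.1)) → ℂ),
    ∀ x, ψ x = u (fun i => x i.1) * v (fun i => x i.1)

/-- A multipartite pure state is fully correlated (not further factorizable) if it is
not a product across any nontrivial bipartition of its parties. -/
def FullyCorrelated {I : Type} [Fintype I] [DecidableEq I] {D : I → ℕ}
    (ψ : ((i : I) → Fin (D i)) → ℂ) : Prop :=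
  ∀ S : Finset I, S.Nonempty → S ≠ Finset.univ → ¬ IsProductAcross ψ S

lemma key {n M K : ℕ} {d : Fin n → ℕ}
    {ψ : ((i : Fin n) → Fin (d i)) → ℂ}
    {x0 : (i : Fin n) → Fin (d i)} (hx0 : ψ x0 ≠ 0)
    {P : Fin n → Fin M} {Q : Fin n → Fin K}
    {φ : (m : Fin M) → (((i : {i // P i = m}) → Fin (d i.1)) → ℂ)}
    {χ : (k : Fin K) → (((i : {i // Q i = k}) → Fin (d i.1)) → ℂ)}
    (hφ : ∀ x, ψ x = ∏ m : Fin M, φ m (fun i => x i.1))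
    (hχ : ∀ x, ψ x = ∏ k : Fin K, χ k (fun i => x i.1))
    (hφc : ∀ m, FullyCorrelated (φ m))
    (m : Fin M) (i0 : Fin n) (hi0 : P i0 = m) :
    ∀ i, P i = m → Q i = Q i0 := by
  by_contra hcon
  push_neg at hcon
  obtain ⟨i1, hP1, hQ1⟩ := hcon
  set k1 := Q i0 with hk1
  set S : Finset {i : Fin n // P i = m} :=
    Finset.univ.filter (fun j => Q j.1 = k1) with hS
  have hmemS : ∀ j : {i : Fin n // P i = m}, j ∈ S ↔ Q j.1 = k1 := by
    intro j; simp [hS]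
  have hS1 : S.Nonempty := ⟨⟨i0, hi0⟩, (hmemS _).mpr rfl⟩
  have hS2 : S ≠ Finset.univ := by
    intro h
    exact hQ1 ((hmemS ⟨i1, hP1⟩).mp (h ▸ Finset.mem_univ _))
  refine hφc m S hS1 hS2 ?_
  have hsplitφ : ∀ x : (i : Fin n) → Fin (d i),
      ψ x = φ m (fun j => x j.1) *
        ∏ m' ∈ Finset.univ.erase m, φ m' (fun j => x j.1) := by
    intro x
    rw [hφ x, ← Finset.mul_prod_erase Finset.univ _ (Finset.mem_univ m)]
  set C : ℂ := ∏ m' ∈ Finset.univ.erase m, φ m' (fun j => x0 j.1) with hCdef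
  have hC : C ≠ 0 := by
    intro h
    apply hx0
    rw [hsplitφ x0, ← hCdef, h, mul_zero]
  set E : ((j : {i : Fin n // P i = m}) → Fin (d j.1)) → ((i : Fin n) → Fin (d i)) :=
    fun y i => if h : P i = m then y ⟨i, h⟩ else x0 i with hE
  have hψE : ∀ y, ψ (E y) = φ m y * C := by
    intro y
    rw [hsplitφ]
    congr 1
    · congr 1
      funext j
      simp only [hE]
      rw [dif_pos j.2]
    · rw [hCdef]
      refine Finset.prod_congr rfl ?_
      intro m' hm'
      congr 1
      funext j
      simp only [hE]
      rw [dif_neg (fun h => (Finset.mem_erase.mp hm').1 (j.2.symm.trans h))]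
  refine ⟨fun ys => χ k1 (fun i =>
      if h : P i.1 = m then ys ⟨⟨i.1, h⟩, (hmemS _).mpr i.2⟩ else x0 i.1),
    fun yc => C⁻¹ * ∏ k ∈ Finset.univ.erase k1, χ k (fun i =>
      if h : P i.1 = m then
        (if h2 : Q i.1 = k1 then x0 i.1
         else yc ⟨⟨i.1, h⟩, fun hm => h2 ((hmemS _).mp hm)⟩)
      else x0 i.1), ?_⟩
  intro y
  have h2 : ψ (E y) = (χ k1 (fun i => E y i.1)) *
      ∏ k ∈ Finset.univ.erase k1, χ k (fun i => E y i.1) := by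
    rw [hχ, ← Finset.mul_prod_erase Finset.univ _ (Finset.mem_univ k1)]
  have hu : χ k1 (fun i : {i : Fin n // Q i = k1} =>
      if h : P i.1 = m then (fun j : {j // j ∈ S} => y j.1) ⟨⟨i.1, h⟩, (hmemS _).mpr i.2⟩
      else x0 i.1) = χ k1 (fun i => E y i.1) := by
    congr 1
  have hW : ∀ k ∈ Finset.univ.erase k1,
      χ k (fun i : {i : Fin n // Q i = k} =>
        if h : P i.1 = m then
          (if h2 : Q i.1 = k1 then x0 i.1
           else (fun j : {j // j ∉ S} => y j.1) ⟨⟨i.1, h⟩, fun hm => h2 ((hmemS _).mp hm)⟩)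
        else x0 i.1)
      = χ k (fun i => E y i.1) := by
    intro k hk
    congr 1
    funext i
    simp only [hE]
    by_cases h : P i.1 = m
    · rw [dif_pos h, dif_pos h,
        dif_neg (fun h2 => (Finset.mem_erase.mp hk).1 (i.2.symm.trans h2))]
    · rw [dif_neg h, dif_neg h]
  calc φ m y = C⁻¹ * (φ m y * C) := by field_simp
    _ = C⁻¹ * ψ (E y) := by rw [hψE]
    _ = C⁻¹ * ((χ k1 (fun i => E y i.1)) *
        ∏ k ∈ Finset.univ.erase k1, χ k (fun i => E y i.1)) := by rw [h2]
    _ = (χ k1 (fun i => E y i.1)) *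
        (C⁻¹ * ∏ k ∈ Finset.univ.erase k1, χ k (fun i => E y i.1)) := by ring
    _ = _ := by
        beta_reduce
        rw [hu, Finset.prod_congr rfl hW]

/-- Uniqueness of the factorization of a pure multipartite state into fully correlated
factors: if a nonzero `ψ` on parties `{1,…,n}` factors both as `φ₁ ⊗ ⋯ ⊗ φ_M` (along
the partition given by `P`) and as `χ₁ ⊗ ⋯ ⊗ χ_K` (along the partition given by `Q`),
with every factor fully correlated, then `M = K`, the two partitions coincide, and
corresponding factors agree up to nonzero scalars. -/
theorem factorization_unique (n M K : ℕ) (d : Fin n → ℕ)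
    (ψ : ((i : Fin n) → Fin (d i)) → ℂ) (hψ : ψ ≠ 0)
    (P : Fin n → Fin M) (hP : Function.Surjective P)
    (Q : Fin n → Fin K) (hQ : Function.Surjective Q)
    (φ : (m : Fin M) → (((i : {i // P i = m}) → Fin (d i.1)) → ℂ))
    (χ : (k : Fin K) → (((i : {i // Q i = k}) → Fin (d i.1)) → ℂ))
    (hφ : ∀ x, ψ x = ∏ m : Fin M, φ m (fun i => x i.1))
    (hχ : ∀ x, ψ x = ∏ k : Fin K, χ k (fun i => x i.1))
    (hφc : ∀ m, FullyCorrelated (φ m)) (hχc : ∀ k, FullyCorrelated (χ k)) :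
    M = K ∧ ∀ m : Fin M, ∃ k : Fin K, (∀ i : Fin n, P i = m ↔ Q i = k) ∧
      ∃ c : ℂ, c ≠ 0 ∧
        ∀ x : (i : Fin n) → Fin (d i), χ k (fun i => x i.1) = c * φ m (fun i => x i.1) := by
  obtain ⟨x0, hx0⟩ := Function.ne_iff.mp hψ
  simp only [Pi.zero_apply] at hx0
  have hφ0 : ∀ m', φ m' (fun j => x0 j.1) ≠ 0 := by
    intro m'
    have h := hx0
    rw [hφ x0] at h
    exact Finset.prod_ne_zero_iff.mp h m' (Finset.mem_univ _)
  have hχ0 : ∀ k', χ k' (fun j => x0 j.1) ≠ 0 := by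
    intro k'
    have h := hx0
    rw [hχ x0] at h
    exact Finset.prod_ne_zero_iff.mp h k' (Finset.mem_univ _)
  choose iP hiP using hP
  choose iQ hiQ using hQ
  set f : Fin M → Fin K := fun m => Q (iP m) with hfdef
  set g : Fin K → Fin M := fun k => P (iQ k) with hgdef
  have hf : ∀ m i, P i = m → Q i = f m :=
    fun m i h => key hx0 hφ hχ hφc m (iP m) (hiP m) i h
  have hg : ∀ k i, Q i = k → P i = g k :=
    fun k i h => key hx0 hχ hφ hχc k (iQ k) (hiQ k) i h
  have hgf : ∀ m, g (f m) = m :=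
    fun m => (hg (f m) (iP m) (hf m (iP m) (hiP m))).symm.trans (hiP m)
  have hfg : ∀ k, f (g k) = k :=
    fun k => (hf (g k) (iQ k) (hg k (iQ k) (hiQ k))).symm.trans (hiQ k)
  have hiff : ∀ m i, (P i = m ↔ Q i = f m) := by
    intro m i
    refine ⟨hf m i, fun h => ?_⟩
    rw [hg (f m) i h, hgf m]
  constructor
  · have e : Fin M ≃ Fin K := ⟨f, g, hgf, hfg⟩
    simpa using Fintype.card_congr e
  intro m
  refine ⟨f m, fun i => hiff m i, ?_⟩
  set k := f m with hkdef
  set A : ℂ := ∏ m' ∈ Finset.univ.erase m, φ m' (fun j => x0 j.1) with hAdef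
  set B : ℂ := ∏ k' ∈ Finset.univ.erase k, χ k' (fun j => x0 j.1) with hBdef
  have hA : A ≠ 0 := Finset.prod_ne_zero_iff.mpr (fun m' _ => hφ0 m')
  have hB : B ≠ 0 := Finset.prod_ne_zero_iff.mpr (fun k' _ => hχ0 k')
  refine ⟨A / B, div_ne_zero hA hB, ?_⟩
  intro x
  set x' : (i : Fin n) → Fin (d i) := fun i => if h : P i = m then x i else x0 i with hx'
  have h1 : ψ x' = φ m (fun j => x j.1) * A := by
    rw [hφ x', ← Finset.mul_prod_erase Finset.univ _ (Finset.mem_univ m)]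
    congr 1
    · congr 1
      funext j
      simp only [hx']
      rw [dif_pos j.2]
    · rw [hAdef]
      refine Finset.prod_congr rfl ?_
      intro m' hm'
      congr 1
      funext j
      simp only [hx']
      rw [dif_neg (fun h => (Finset.mem_erase.mp hm').1 (j.2.symm.trans h))]
  have h2 : ψ x' = χ k (fun j => x j.1) * B := by
    rw [hχ x', ← Finset.mul_prod_erase Finset.univ _ (Finset.mem_univ k)]
    congr 1
    · congr 1
      funext j
      simp only [hx']
      rw [dif_pos ((hiff m j.1).mpr j.2)]
    · rw [hBdef]
      refine Finset.prod_congr rfl ?_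
      intro k' hk'
      congr 1
      funext j
      simp only [hx']
      rw [dif_neg (fun h => (Finset.mem_erase.mp hk').1 (j.2.symm.trans (hf m j.1 h)))]
  have h3 : χ k (fun j => x j.1) * B = φ m (fun j => x j.1) * A := h2.symm.trans h1
  field_simp
  linear_combination h3
end
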